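/- Let A, B, C, A', B', C' be real vector spaces and let d : A → B, d' : B → C, Q : B → B', δ : B' → A', δ' : C' → B' be linear maps with d' ∘ d = 0 and δ ∘ δ' = 0; define ℋ := {w ∈ B : d' w = 0 and δ(Q w) = 0}, 𝓑 := range(d) ⊓ Q⁻¹(range δ'), ℋ' := {ξ ∈ B' : δ ξ = δ(Q η) for some η ∈ ker d'}, and 𝓑' := (Q ∘ d)(A) + range δ'. Suppose given bilinear pairings ⟨·,·⟩_A : A × A' → ℝ, ⟨·,·⟩_B : B × B' → ℝ, ⟨·,·⟩_C : C × C' → ℝ satisfying ⟨d φ, ξ⟩_B = ⟨φ, δ ξ⟩_A for all φ ∈ A, ξ ∈ B'; ⟨w, δ' ρ⟩_B = ⟨d' w, ρ⟩_C for all w ∈ B, ρ ∈ C'; and ⟨v, Q w⟩_B = ⟨w, Q v⟩_B for all v, w ∈ B. Then ⟨v, ξ⟩_B = 0 whenever v ∈ 𝓑 and ξ ∈ ℋ', and ⟨w, ξ⟩_B = 0 whenever w ∈ ℋ and ξ ∈ 𝓑'. Consequently ⟨·,·⟩_B descends to a well-defined bilinear pairing (ℋ ⧸ 𝓑) × (ℋ'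 ⧸ 𝓑') → ℝ. -/

import Mathlib

/-- Descent part of Theorem 2.11 of Branson–Gover: in a fixed conformal scale,
the pairing between `B` (modelling `E^k`) and `B'` (modelling `E_k`) vanishes
on `𝓑 × ℋ'` and on `ℋ × 𝓑'`, and hence descends to a pairing
`(ℋ ⧸ 𝓑) × (ℋ' ⧸ 𝓑') → ℝ`. -/
theorem stmt_8
    {A B C A' B' C' : Type*}
    [AddCommGroup A] [Module ℝ A] [AddCommGroup B] [Module ℝ B]
    [AddCommGroup C] [Module ℝ C] [AddCommGroup A'] [Module ℝ A']
    [AddCommGroup B'] [Module ℝ B'] [AddCommGroup C'] [Module ℝ C']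
    (d : A →ₗ[ℝ] B) (d' : B →ₗ[ℝ] C) (Q : B →ₗ[ℝ] B')
    (δ : B' →ₗ[ℝ] A') (δ' : C' →ₗ[ℝ] B')
    (hdd : d' ∘ₗ d = 0) (hδδ : δ ∘ₗ δ' = 0)
    (pA : A →ₗ[ℝ] A' →ₗ[ℝ] ℝ) (pB : B →ₗ[ℝ] B' →ₗ[ℝ] ℝ) (pC : C →ₗ[ℝ] C' →ₗ[ℝ] ℝ)
    (hadj₁ : ∀ (φ : A) (ξ : B'), pB (d φ) ξ = pA φ (δ ξ))
    (hadj₂ : ∀ (w : B) (ρ : C'), pB w (δ' ρ) = pC (d' w) ρ)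
    (hQsym : ∀ v w : B, pB v (Q w) = pB w (Q v)) :
    (∀ v ∈ LinearMap.range d ⊓ Submodule.comap Q (LinearMap.range δ'),
      ∀ ξ ∈ Submodule.comap δ (Submodule.map δ (Submodule.map Q (LinearMap.ker d'))),
        pB v ξ = 0) ∧
    (∀ w ∈ LinearMap.ker d' ⊓ LinearMap.ker (δ ∘ₗ Q),
      ∀ ξ ∈ LinearMap.range (Q ∘ₗ d) ⊔ LinearMap.range δ',
        pB w ξ = 0) ∧
    ∃ Bbar : (↥(LinearMap.ker d' ⊓ LinearMap.ker (δ ∘ₗ Q)) ⧸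
          (LinearMap.range d ⊓ Submodule.comap Q (LinearMap.range δ')).comap
            (LinearMap.ker d' ⊓ LinearMap.ker (δ ∘ₗ Q)).subtype) →ₗ[ℝ]
        (↥(Submodule.comap δ (Submodule.map δ (Submodule.map Q (LinearMap.ker d')))) ⧸
          (LinearMap.range (Q ∘ₗ d) ⊔ LinearMap.range δ').comap
            (Submodule.comap δ
              (Submodule.map δ (Submodule.map Q (LinearMap.ker d')))).subtype) →ₗ[ℝ] ℝ,
      ∀ (w : ↥(LinearMap.ker d' ⊓ LinearMap.ker (δ ∘ₗ Q)))
        (ξ : ↥(Submodule.comap δ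
                (Submodule.map δ (Submodule.map Q (LinearMap.ker d'))))),
        Bbar (Submodule.Quotient.mk w) (Submodule.Quotient.mk ξ) = pB (w : B) (ξ : B') := by
  have h1 : ∀ v ∈ LinearMap.range d ⊓ Submodule.comap Q (LinearMap.range δ'),
      ∀ ξ ∈ Submodule.comap δ (Submodule.map δ (Submodule.map Q (LinearMap.ker d'))),
        pB v ξ = 0 := by
    rintro v ⟨⟨φ, rfl⟩, ρ, hρ⟩ ξ hξ
    obtain ⟨-, ⟨η, hη, rfl⟩, hδξ⟩ := hξ
    have hη0 : d' η = 0 := hη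
    calc pB (d φ) ξ = pA φ (δ ξ) := hadj₁ φ ξ
      _ = pA φ (δ (Q η)) := by rw [← hδξ]
      _ = pB (d φ) (Q η) := (hadj₁ φ (Q η)).symm
      _ = pB η (Q (d φ)) := hQsym (d φ) η
      _ = pB η (δ' ρ) := by rw [hρ]
      _ = pC (d' η) ρ := hadj₂ η ρ
      _ = 0 := by rw [hη0]; simp
  have h2 : ∀ w ∈ LinearMap.ker d' ⊓ LinearMap.ker (δ ∘ₗ Q),
      ∀ ξ ∈ LinearMap.range (Q ∘ₗ d) ⊔ LinearMap.range δ',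
        pB w ξ = 0 := by
    rintro w ⟨hw1, hw2⟩ ξ hξ
    have hw1' : d' w = 0 := hw1
    have hw2' : δ (Q w) = 0 := hw2
    obtain ⟨x, ⟨φ, rfl⟩, y, ⟨ρ, rfl⟩, rfl⟩ := Submodule.mem_sup.mp hξ
    have e1 : pB w ((Q ∘ₗ d) φ) = 0 := by
      have : pB w (Q (d φ)) = pB (d φ) (Q w) := hQsym w (d φ)
      simp only [LinearMap.comp_apply] at *
      rw [this, hadj₁, hw2']
      simp
    have e2 : pB w (δ' ρ) = 0 := by rw [hadj₂, hw1']; simp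
    simp only [map_add, e1, e2, add_zero]
  refine ⟨h1, h2, ?_⟩
  set ℋ := LinearMap.ker d' ⊓ LinearMap.ker (δ ∘ₗ Q) with hℋ
  set ℋ' := Submodule.comap δ (Submodule.map δ (Submodule.map Q (LinearMap.ker d'))) with hℋ'
  set 𝓑 := LinearMap.range d ⊓ Submodule.comap Q (LinearMap.range δ') with h𝓑
  set 𝓑' := LinearMap.range (Q ∘ₗ d) ⊔ LinearMap.range δ' with h𝓑'
  -- inner lift: for w : ℋ, a map ℋ'⧸𝓑' → ℝ
  let f : ↥ℋ →ₗ[ℝ] ↥ℋ' →ₗ[ℝ] ℝ :=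
    ((pB.comp ℋ.subtype).compl₂ ℋ'.subtype)
  let g : ↥ℋ →ₗ[ℝ] (↥ℋ' ⧸ 𝓑'.comap ℋ'.subtype) →ₗ[ℝ] ℝ :=
    { toFun := fun w => Submodule.liftQ _ (f w) (by
        intro ξ hξ
        exact h2 (w : B) w.2 (ξ : B') hξ)
      map_add' := by
        intro a b
        ext x
        simp [f]
        rfl
      map_smul' := by
        intro c a
        ext x
        simp [f]
        exact Or.inl rfl }
  refine ⟨Submodule.liftQ _ g ?_, ?_⟩
  · intro w hw
    ext x
    simp only [g, f, Submodule.liftQ_apply, LinearMap.zero_apply, LinearMap.comp_apply,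
      LinearMap.compl₂_apply, Submodule.subtype_apply, Submodule.Quotient.mk''_eq_mk,
      LinearMap.zero_comp]
    exact h1 (w : B) hw (x : B') x.2
  · intro w ξ
    simp [g, f]
    rfl
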